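/- arXiv:1309.6697 — 2 statements merged into one kernel-verified Lean document; each statement's English description precedes it below -/
import Mathlib

section
/- For every dimension d ≥ 1 and every vector x ∈ ℝ^d, the integral ∫_{ℝ^d} (1 - cos(uᵀx)) / (c_d |u|^{d+1}) du equals |x|, where |·| is the Euclidean norm and c_d = π^{(1+d)/2} / Γ((1+d)/2). -/
open Real MeasureTheory Set Filter Topology

-- t-integral (Gamma representation)
lemma tgamma_val {P b : ℝ} (hP : 0 < P) (hb : 0 < b) :
    ∫ t in Ioi (0:ℝ), t ^ (P-1) * rexp (-b * t) = b ^ (-P) * Real.Gamma P := by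
  have h := integral_rpow_mul_exp_neg_mul_rpow (p := 1) (q := P - 1) (b := b)
    one_pos (by linarith) hb
  simp only [rpow_one] at h
  rw [h]
  norm_num

lemma tgamma_int {P b : ℝ} (hP : 0 < P) (hb : 0 < b) :
    IntegrableOn (fun t => t ^ (P-1) * rexp (-b * t)) (Ioi (0:ℝ)) := by
  have h := integrableOn_rpow_mul_exp_neg_mul_rpow (p := 1) (s := P - 1) (b := b)
    (by linarith) one_pos hb
  simpa only [rpow_one] using h

variable {d : ℕ}
local notation "E" => EuclideanSpace ℝ (Fin d)

section Gauss
open Complex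

theorem gauss_int {t : ℝ} (ht : 0 < t) (x : E) :
    Integrable (fun v : E => rexp (-t * ‖v‖^2)) := by
  have h := (GaussianFourier.integrable_cexp_neg_mul_sq_norm_add (V := E)
    (b := (t:ℂ)) (by simpa using ht) 0 x).norm
  have : ∀ v : E, rexp (-t * ‖v‖^2)
      = ‖cexp (-(t:ℂ) * ‖v‖^2 + 0 * ((inner ℝ x v : ℝ):ℂ))‖ := by
    intro v
    rw [Complex.norm_exp]
    have h2 : (-(t:ℂ) * (‖v‖:ℂ)^2 + 0 * ((inner ℝ x v : ℝ):ℂ)) = ((-t*‖v‖^2 : ℝ):ℂ) := by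
      push_cast; ring
    rw [h2, Complex.ofReal_re]
  rw [show (fun v : E => rexp (-t * ‖v‖^2)) = _ from funext this]
  exact h

theorem gauss_cos_int {t : ℝ} (ht : 0 < t) (x : E) :
    Integrable (fun v : E => Real.cos (inner ℝ x v : ℝ) * rexp (-t * ‖v‖^2)) := by
  apply (gauss_int ht x).mono'
  · apply Continuous.aestronglyMeasurable
    exact ((Real.continuous_cos.comp (Continuous.inner continuous_const continuous_id))).mul
      (Real.continuous_exp.comp
        (((continuous_const (y := -t)).mul (continuous_norm.pow 2))))
  · refine Filter.Eventually.of_forall (fun v => ?_)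
    rw [norm_mul, Real.norm_eq_abs, Real.norm_eq_abs, Real.abs_exp]
    have := abs_cos_le_one (inner ℝ x v : ℝ)
    nlinarith [Real.exp_pos (-t * ‖v‖^2)]

theorem gauss_cos {t : ℝ} (ht : 0 < t) (x : E) :
    ∫ v : E, Real.cos (inner ℝ x v : ℝ) * rexp (-t * ‖v‖^2)
      = (π/t) ^ ((d:ℝ)/2) * rexp (-‖x‖^2/(4*t)) := by
  have hb : 0 < ((t:ℂ)).re := by simpa using ht
  have hA := GaussianFourier.integral_cexp_neg_mul_sq_norm_add (V := E) hb Complex.I x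
  have hB := GaussianFourier.integral_cexp_neg_mul_sq_norm_add (V := E) hb (-Complex.I) x
  have hiA : Integrable (fun v : E => cexp (-(t:ℂ) * ‖v‖^2 + Complex.I * ((inner ℝ x v : ℝ):ℂ))) :=
    GaussianFourier.integrable_cexp_neg_mul_sq_norm_add hb Complex.I x
  have hiB : Integrable (fun v : E => cexp (-(t:ℂ) * ‖v‖^2 + (-Complex.I) * ((inner ℝ x v : ℝ):ℂ))) :=
    GaussianFourier.integrable_cexp_neg_mul_sq_norm_add hb (-Complex.I) x
  have hrank : (Module.finrank ℝ (EuclideanSpace ℝ (Fin d)) : ℂ) = (d:ℂ) := by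
    norm_cast
    exact finrank_euclideanSpace_fin
  have hpow : ((π:ℂ)/(t:ℂ)) ^ ((Module.finrank ℝ (EuclideanSpace ℝ (Fin d)) : ℂ)/2)
      = (((π/t) ^ ((d:ℝ)/2) : ℝ) : ℂ) := by
    rw [hrank, Complex.ofReal_cpow (by positivity)]
    push_cast
    ring_nf
  have key : (∫ v : E, ((2 * (Real.cos (inner ℝ x v : ℝ) * rexp (-t * ‖v‖^2)) : ℝ) : ℂ))
      = ((2 * ((π/t) ^ ((d:ℝ)/2) * rexp (-‖x‖^2/(4*t))) : ℝ) : ℂ) := by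
    have : ∀ v : E, ((2 * (Real.cos (inner ℝ x v : ℝ) * rexp (-t * ‖v‖^2)) : ℝ) : ℂ)
        = cexp (-(t:ℂ) * ‖v‖^2 + Complex.I * ((inner ℝ x v : ℝ):ℂ))
          + cexp (-(t:ℂ) * ‖v‖^2 + (-Complex.I) * ((inner ℝ x v : ℝ):ℂ)) := by
      intro v
      rw [Complex.exp_add, Complex.exp_add, ← mul_add]
      push_cast
      rw [Complex.cos]
      ring_nf
    rw [integral_congr_ae (Filter.Eventually.of_forall this), integral_add hiA hiB, hA, hB, hpow]
    have h1 : cexp (Complex.I ^ 2 * (‖x‖:ℂ)^2 / (4*(t:ℂ)))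
        = ((rexp (-‖x‖^2/(4*t)) : ℝ) : ℂ) := by
      rw [Complex.I_sq]
      rw [show (-1 : ℂ) * (‖x‖:ℂ)^2 / (4*(t:ℂ)) = ((-‖x‖^2/(4*t) : ℝ) : ℂ) by push_cast; ring]
      exact (Complex.ofReal_exp _).symm
    have h2 : cexp ((-Complex.I) ^ 2 * (‖x‖:ℂ)^2 / (4*(t:ℂ)))
        = ((rexp (-‖x‖^2/(4*t)) : ℝ) : ℂ) := by
      rw [show (-Complex.I)^2 = Complex.I^2 by ring]
      exact h1
    rw [h1, h2]
    push_cast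
    ring
  have key2 : (∫ v : E, 2 * (Real.cos (inner ℝ x v : ℝ) * rexp (-t * ‖v‖^2)) : ℝ)
      = 2 * ((π/t) ^ ((d:ℝ)/2) * rexp (-‖x‖^2/(4*t))) := by
    exact Complex.ofReal_inj.mp ((integral_ofReal (𝕜 := ℂ)).symm.trans key)
  have hint : Integrable (fun v : E => Real.cos (inner ℝ x v : ℝ) * rexp (-t * ‖v‖^2)) := by
    apply (gauss_int ht x).mono'
    · apply Continuous.aestronglyMeasurable
      exact ((Real.continuous_cos.comp (Continuous.inner continuous_const continuous_id))).mul
        (Real.continuous_exp.comp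
          (((continuous_const (y := -t)).mul (continuous_norm.pow 2))))
    · refine Filter.Eventually.of_forall (fun v => ?_)
      rw [norm_mul, Real.norm_eq_abs, Real.norm_eq_abs, Real.abs_exp]
      have := abs_cos_le_one (inner ℝ x v : ℝ)
      nlinarith [Real.exp_pos (-t * ‖v‖^2)]
  rw [integral_const_mul] at key2
  linarith

end Gauss


lemma one_sub_exp_neg_nonneg {y : ℝ} (hy : 0 ≤ y) : 0 ≤ 1 - rexp (-y) := by
  have : rexp (-y) ≤ rexp 0 := Real.exp_le_exp.mpr (by linarith)
  rw [Real.exp_zero] at this; linarith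

lemma one_sub_exp_neg_le_one (y : ℝ) : 1 - rexp (-y) ≤ 1 := by
  have := Real.exp_pos (-y); linarith

lemma one_sub_exp_neg_le (y : ℝ) : 1 - rexp (-y) ≤ y := by
  have := Real.add_one_le_exp (-y); linarith

section J
variable {a : ℝ}

lemma JcontOn (a c : ℝ) {S : Set ℝ} (hS : S ⊆ Ioi 0) :
    ContinuousOn (fun s : ℝ => s ^ (c:ℝ) * (1 - rexp (-(a*s)))) S := by
  intro s hs
  exact ((Real.continuousAt_rpow_const s c (Or.inl (ne_of_gt (hS hs)))).continuousWithinAt).mul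
    ((by fun_prop : Continuous fun s : ℝ => 1 - rexp (-(a*s))).continuousWithinAt)

lemma rpow_shift {s : ℝ} (hs : 0 < s) (c : ℝ) : s ^ (c:ℝ) * s = s ^ (c+1) := by
  rw [Real.rpow_add hs, Real.rpow_one]

lemma Jint (ha : 0 < a) :
    IntegrableOn (fun s : ℝ => s ^ (-(3/2) : ℝ) * (1 - rexp (-(a*s)))) (Ioi 0) := by
  rw [← Ioc_union_Ioi_eq_Ioi (zero_le_one (α := ℝ))]
  apply IntegrableOn.union
  · have hg : IntegrableOn (fun s : ℝ => a * s ^ (-(1/2) : ℝ)) (Ioc 0 1) := by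
      have h1 : IntervalIntegrable (fun s : ℝ => s ^ (-(1/2):ℝ)) volume 0 1 :=
        intervalIntegral.intervalIntegrable_rpow' (by norm_num)
      exact ((intervalIntegrable_iff_integrableOn_Ioc_of_le zero_le_one).mp h1).const_mul a
    apply hg.mono' ((JcontOn a _ Ioc_subset_Ioi_self).aestronglyMeasurable measurableSet_Ioc)
    rw [ae_restrict_iff' measurableSet_Ioc]
    refine Filter.Eventually.of_forall (fun s hs => ?_)
    have hs0 : 0 < s := hs.1
    have h1 : 0 ≤ 1 - rexp (-(a*s)) := one_sub_exp_neg_nonneg (by positivity)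
    rw [Real.norm_eq_abs, abs_of_nonneg (by positivity)]
    calc s ^ (-(3/2) : ℝ) * (1 - rexp (-(a*s))) ≤ s ^ (-(3/2) : ℝ) * (a*s) :=
          mul_le_mul_of_nonneg_left (one_sub_exp_neg_le _) (by positivity)
      _ = a * (s ^ (-(3/2) : ℝ) * s) := by ring
      _ = a * s ^ (-(1/2) : ℝ) := by rw [rpow_shift hs0]; norm_num
  · have hg : IntegrableOn (fun s : ℝ => s ^ (-(3/2) : ℝ)) (Ioi 1) :=
      integrableOn_Ioi_rpow_of_lt (by norm_num) one_pos
    apply hg.mono' ((JcontOn a _ (Ioi_subset_Ioi zero_le_one)).aestronglyMeasurable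
      measurableSet_Ioi)
    rw [ae_restrict_iff' measurableSet_Ioi]
    refine Filter.Eventually.of_forall (fun s hs => ?_)
    have hs0 : (0:ℝ) < s := lt_trans one_pos hs
    have h1 : 0 ≤ 1 - rexp (-(a*s)) := one_sub_exp_neg_nonneg (by positivity)
    rw [Real.norm_eq_abs, abs_of_nonneg (by positivity)]
    calc s ^ (-(3/2) : ℝ) * (1 - rexp (-(a*s))) ≤ s ^ (-(3/2) : ℝ) * 1 :=
          mul_le_mul_of_nonneg_left (one_sub_exp_neg_le_one _) (by positivity)
      _ = s ^ (-(3/2) : ℝ) := mul_one _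

lemma gamma_half_int (ha : 0 < a) :
    IntegrableOn (fun s : ℝ => s ^ (-(1/2) : ℝ) * rexp (-(a*s))) (Ioi 0) := by
  have h := integrableOn_rpow_mul_exp_neg_mul_rpow (p := 1) (s := -(1/2)) (b := a)
    (by norm_num) one_pos ha
  simpa only [Real.rpow_one, neg_mul] using h

lemma gamma_half_val (ha : 0 < a) :
    ∫ s in Ioi (0:ℝ), s ^ (-(1/2) : ℝ) * rexp (-(a*s)) = a ^ (-(1/2):ℝ) * √π := by
  have h := integral_rpow_mul_exp_neg_mul_rpow (p := 1) (q := -(1/2)) (b := a)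
    one_pos (by norm_num) ha
  simp only [Real.rpow_one, neg_mul] at h
  rw [h]
  norm_num [Real.Gamma_one_half_eq]

lemma Jval (ha : 0 < a) :
    ∫ s in Ioi (0:ℝ), s ^ (-(3/2) : ℝ) * (1 - rexp (-(a*s))) = 2 * √π * √a := by
  set g : ℝ → ℝ := fun s => -2 * (s ^ (-(1/2) : ℝ) * (1 - rexp (-(a*s)))) with hgdef
  set f' : ℝ → ℝ := fun s =>
    s ^ (-(3/2) : ℝ) * (1 - rexp (-(a*s))) - 2*a*(s ^ (-(1/2) : ℝ) * rexp (-(a*s))) with hf'def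
  have hderiv : ∀ s ∈ Ioi (0:ℝ), HasDerivAt g (f' s) s := by
    intro s hs
    have hs0 : (0:ℝ) < s := hs
    have h1 : HasDerivAt (fun s : ℝ => s ^ (-(1/2) : ℝ)) (-(1/2) * s ^ (-(3/2) : ℝ)) s := by
      have := Real.hasDerivAt_rpow_const (x := s) (p := -(1/2)) (Or.inl hs0.ne')
      convert this using 2
      norm_num
    have h2 : HasDerivAt (fun s : ℝ => 1 - rexp (-(a*s))) (a * rexp (-(a*s))) s := by
      have hin : HasDerivAt (fun s : ℝ => -(a*s)) (-a) s := by
        exact (((hasDerivAt_id s).const_mul a).neg).congr_deriv (by simp)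
      have h3 := ((Real.hasDerivAt_exp (-(a*s))).comp s hin).const_sub 1
      exact h3.congr_deriv (by ring)
    have := (h1.mul h2).const_mul (-2)
    exact this.congr_deriv (by simp only [hf'def]; ring)
  have hcont : ContinuousWithinAt g (Ici 0) 0 := by
    have hg0 : g 0 = 0 := by
      simp [hgdef, Real.zero_rpow (by norm_num : (-(1/2):ℝ) ≠ 0)]
    rw [ContinuousWithinAt, hg0]
    apply squeeze_zero_norm' (a := fun s : ℝ => 2*a*s ^ ((1/2):ℝ))
    · filter_upwards [self_mem_nhdsWithin] with s (hs : s ∈ Ici 0)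
      rcases eq_or_lt_of_le (show (0:ℝ) ≤ s from hs) with h | h
      · simp [hgdef, ← h, Real.zero_rpow (by norm_num : (-(1/2):ℝ) ≠ 0),
          Real.zero_rpow (by norm_num : ((1/2):ℝ) ≠ 0)]
      · have h1 : 0 ≤ 1 - rexp (-(a*s)) := one_sub_exp_neg_nonneg (by positivity)
        have h2 : 0 ≤ s ^ (-(1/2):ℝ) * (1 - rexp (-(a*s))) := by positivity
        rw [hgdef]
        simp only [Real.norm_eq_abs]
        rw [abs_mul, abs_of_nonneg h2]
        have hb : s ^ (-(1/2):ℝ) * (1 - rexp (-(a*s))) ≤ a * s ^ ((1/2):ℝ) := by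
          calc s ^ (-(1/2):ℝ) * (1 - rexp (-(a*s))) ≤ s ^ (-(1/2):ℝ) * (a*s) :=
                mul_le_mul_of_nonneg_left (one_sub_exp_neg_le _) (by positivity)
            _ = a * (s ^ (-(1/2):ℝ) * s) := by ring
            _ = a * s ^ ((1/2):ℝ) := by rw [rpow_shift h]; norm_num
        rw [abs_of_neg (by norm_num : (-2:ℝ) < 0)]
        nlinarith
    · have hc : ContinuousWithinAt (fun s : ℝ => 2*a*s ^ ((1/2):ℝ)) (Ici 0) 0 := by
        apply ContinuousWithinAt.mul continuousWithinAt_const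
        exact (Real.continuousAt_rpow_const 0 _ (Or.inr (by norm_num))).continuousWithinAt
      have : (2*a*(0:ℝ) ^ ((1/2):ℝ)) = 0 := by
        rw [Real.zero_rpow (by norm_num : ((1/2):ℝ) ≠ 0)]; ring
      rw [ContinuousWithinAt, this] at hc
      exact hc
  have htop : Tendsto g atTop (𝓝 0) := by
    apply squeeze_zero_norm' (a := fun s : ℝ => 2*s ^ (-(1/2):ℝ))
    · filter_upwards [eventually_gt_atTop (0:ℝ)] with s hs
      have h1 : 0 ≤ 1 - rexp (-(a*s)) := one_sub_exp_neg_nonneg (by positivity)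
      have h2 : 0 ≤ s ^ (-(1/2):ℝ) * (1 - rexp (-(a*s))) := by positivity
      rw [hgdef]
      simp only [Real.norm_eq_abs]
      rw [abs_mul, abs_of_nonneg h2]
      have hb : s ^ (-(1/2):ℝ) * (1 - rexp (-(a*s))) ≤ s ^ (-(1/2):ℝ) := by
        calc s ^ (-(1/2):ℝ) * (1 - rexp (-(a*s))) ≤ s ^ (-(1/2):ℝ) * 1 :=
              mul_le_mul_of_nonneg_left (one_sub_exp_neg_le_one _) (by positivity)
          _ = s ^ (-(1/2):ℝ) := mul_one _
      rw [abs_of_neg (by norm_num : (-2:ℝ) < 0)]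
      nlinarith
    · have := tendsto_rpow_neg_atTop (by norm_num : (0:ℝ) < 1/2)
      have h2 := this.const_mul (2:ℝ)
      simpa using h2
  have hf'int : IntegrableOn f' (Ioi 0) := by
    apply Integrable.sub (Jint ha)
    exact ((gamma_half_int ha).const_mul (2*a))
  have hibp := integral_Ioi_of_hasDerivAt_of_tendsto hcont hderiv hf'int htop
  have hg0 : g 0 = 0 := by
    simp [hgdef, Real.zero_rpow (by norm_num : (-(1/2):ℝ) ≠ 0)]
  rw [hg0, sub_zero] at hibp
  have hsplit : ∫ s in Ioi (0:ℝ), f' s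
      = (∫ s in Ioi (0:ℝ), s ^ (-(3/2) : ℝ) * (1 - rexp (-(a*s))))
        - ∫ s in Ioi (0:ℝ), 2*a*(s ^ (-(1/2) : ℝ) * rexp (-(a*s))) := by
    exact integral_sub (Jint ha) ((gamma_half_int ha).const_mul (2*a))
  rw [hibp] at hsplit
  rw [integral_const_mul, gamma_half_val ha] at hsplit
  have hrw : 2*a*(a ^ (-(1/2):ℝ) * √π) = 2 * √π * √a := by
    have e : a ^ (-(1/2):ℝ) = (√a)⁻¹ := by
      rw [Real.sqrt_eq_rpow, ← Real.rpow_neg ha.le]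
    have h2 : √a * √a = a := Real.mul_self_sqrt ha.le
    have h3 : √a ≠ 0 := by positivity
    rw [e]
    field_simp
    rw [sq, h2]
  linarith [hsplit, hrw]
end J

lemma KcontOn (a c : ℝ) {S : Set ℝ} (hS : S ⊆ Ioi 0) :
    ContinuousOn (fun t : ℝ => t ^ (c:ℝ) * (1 - rexp (-(a/t)))) S := by
  intro t ht
  have ht0 : (0:ℝ) < t := hS ht
  apply ContinuousWithinAt.mul
  · exact (Real.continuousAt_rpow_const t c (Or.inl ht0.ne')).continuousWithinAt
  · apply ContinuousWithinAt.sub continuousWithinAt_const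
    apply (Real.continuous_exp.continuousAt).comp_continuousWithinAt
    exact ((continuousAt_const.div continuousAt_id ht0.ne').neg).continuousWithinAt

lemma Kint {a : ℝ} (ha : 0 < a) :
    IntegrableOn (fun t : ℝ => t ^ (-(1/2) : ℝ) * (1 - rexp (-(a/t)))) (Ioi 0) := by
  rw [← Ioc_union_Ioi_eq_Ioi (zero_le_one (α := ℝ))]
  apply IntegrableOn.union
  · have hg : IntegrableOn (fun t : ℝ => t ^ (-(1/2) : ℝ)) (Ioc 0 1) := by
      have h1 : IntervalIntegrable (fun s : ℝ => s ^ (-(1/2):ℝ)) volume 0 1 :=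
        intervalIntegral.intervalIntegrable_rpow' (by norm_num)
      exact (intervalIntegrable_iff_integrableOn_Ioc_of_le zero_le_one).mp h1
    apply hg.mono' ((KcontOn a _ Ioc_subset_Ioi_self).aestronglyMeasurable measurableSet_Ioc)
    rw [ae_restrict_iff' measurableSet_Ioc]
    refine Filter.Eventually.of_forall (fun t ht => ?_)
    have ht0 : 0 < t := ht.1
    have h1 : 0 ≤ 1 - rexp (-(a/t)) := one_sub_exp_neg_nonneg (by positivity)
    rw [Real.norm_eq_abs, abs_of_nonneg (by positivity)]
    calc t ^ (-(1/2) : ℝ) * (1 - rexp (-(a/t))) ≤ t ^ (-(1/2) : ℝ) * 1 :=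
          mul_le_mul_of_nonneg_left (one_sub_exp_neg_le_one _) (by positivity)
      _ = t ^ (-(1/2) : ℝ) := mul_one _
  · have hg : IntegrableOn (fun t : ℝ => a * t ^ (-(3/2) : ℝ)) (Ioi 1) :=
      (integrableOn_Ioi_rpow_of_lt (by norm_num) one_pos).const_mul a
    apply hg.mono' ((KcontOn a _ (Ioi_subset_Ioi zero_le_one)).aestronglyMeasurable
      measurableSet_Ioi)
    rw [ae_restrict_iff' measurableSet_Ioi]
    refine Filter.Eventually.of_forall (fun t ht => ?_)
    have ht0 : (0:ℝ) < t := lt_trans one_pos ht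
    have h1 : 0 ≤ 1 - rexp (-(a/t)) := one_sub_exp_neg_nonneg (by positivity)
    rw [Real.norm_eq_abs, abs_of_nonneg (by positivity)]
    calc t ^ (-(1/2) : ℝ) * (1 - rexp (-(a/t))) ≤ t ^ (-(1/2) : ℝ) * (a/t) :=
          mul_le_mul_of_nonneg_left (one_sub_exp_neg_le _) (by positivity)
      _ = a * (t ^ (-(1/2) : ℝ) * t⁻¹) := by ring
      _ = a * t ^ (-(3/2) : ℝ) := by
          rw [show t⁻¹ = t ^ (-(1:ℝ)) from (Real.rpow_neg_one t).symm,
            ← Real.rpow_add ht0]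
          norm_num

lemma Kval {a : ℝ} (ha : 0 < a) :
    ∫ t in Ioi (0:ℝ), t ^ (-(1/2) : ℝ) * (1 - rexp (-(a/t))) = 2 * √π * √a := by
  rw [← Jval ha]
  have h := integral_comp_rpow_Ioi (fun y : ℝ => y ^ (-(3/2) : ℝ) * (1 - rexp (-(a*y))))
    (p := -1) (by norm_num)
  rw [← h]
  apply setIntegral_congr_fun measurableSet_Ioi
  intro t ht
  have ht0 : (0:ℝ) < t := ht
  have h1 : t ^ (-1:ℝ) = t⁻¹ := Real.rpow_neg_one t
  simp only [smul_eq_mul, h1]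
  rw [Real.inv_rpow ht0.le, ← Real.rpow_neg ht0.le]
  norm_num
  rw [show a * t⁻¹ = a / t from by ring]
  rw [show (t ^ 2)⁻¹ * (t ^ ((3:ℝ)/2) * (1 - rexp (-(a/t))))
      = (t ^ (-2:ℝ) * t ^ ((3:ℝ)/2)) * (1 - rexp (-(a/t))) from by
        rw [Real.rpow_neg ht0.le, Real.rpow_two]; ring,
    ← Real.rpow_add ht0]
  norm_num



theorem main (hd : 1 ≤ d) (x : E) (hx : x ≠ 0) :
    ∫ u : E, (1 - Real.cos (inner ℝ u x : ℝ)) / ‖u‖ ^ (d + 1)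
      = (Real.pi ^ ((1 + (d : ℝ)) / 2) / Real.Gamma ((1 + (d : ℝ)) / 2)) * ‖x‖ := by
  have _i : Nonempty (Fin d) := ⟨⟨0, hd⟩⟩
  set P : ℝ := (1 + (d:ℝ)) / 2 with hPdef
  have hP : 0 < P := by positivity
  have hΓ : 0 < Real.Gamma P := Real.Gamma_pos_of_pos hP
  have hxn : 0 < ‖x‖ := norm_pos_iff.mpr hx
  set a : ℝ := ‖x‖^2/4 with hadef
  have ha : 0 < a := by positivity
  -- the nonnegative integrand
  set f : E → ℝ := fun u => (1 - Real.cos (inner ℝ u x : ℝ)) / ‖u‖ ^ (d + 1) with hfdef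
  have hcos : ∀ r : ℝ, 0 ≤ 1 - Real.cos r := fun r => by
    have := Real.cos_le_one r; linarith
  have hf0 : ∀ u, 0 ≤ f u := fun u => div_nonneg (hcos _) (by positivity)
  have hfm : AEStronglyMeasurable f (volume : Measure (EuclideanSpace ℝ (Fin d))) := by
    apply Measurable.aestronglyMeasurable
    apply Measurable.div
    · apply Measurable.const_sub
      apply Real.measurable_cos.comp
      exact (Continuous.inner continuous_id continuous_const).measurable
    · exact (continuous_norm.pow (d+1)).measurable
  -- F
  set F : E → ℝ → ℝ := fun u t =>
    (1 - Real.cos (inner ℝ u x : ℝ)) * (t ^ (P-1) * rexp (-‖u‖^2 * t)) with hFdef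
  have hF0 : ∀ u, ∀ t ∈ Ioi (0:ℝ), 0 ≤ F u t := by
    intro u t ht
    have : (0:ℝ) < t := ht
    have h2 : (0:ℝ) ≤ t ^ (P-1) := Real.rpow_nonneg this.le _
    have := hcos (inner ℝ u x : ℝ)
    positivity
  have hFint : ∀ u : E, IntegrableOn (F u) (Ioi 0) := by
    intro u
    by_cases hu : ‖u‖ = 0
    · -- u = 0 : F u t = (1 - cos ⟪u,x⟫) * ... with ‖u‖ = 0: exp (-0*t)=1, t^(P-1) not integrable!
      -- but 1 - cos ⟪u,x⟫ = 0 since u = 0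
      have hu0 : u = 0 := norm_eq_zero.mp hu
      have : F u = fun t => 0 := by
        funext t
        simp [hFdef, hu0]
      rw [this]
      exact integrableOn_zero
    · have hb : 0 < ‖u‖^2 := by positivity
      have := (tgamma_int hP hb).const_mul (1 - Real.cos (inner ℝ u x : ℝ))
      exact this
  -- step 1
  have step1 : ∫ u : E, f u = (∫⁻ u : E, ENNReal.ofReal (f u)).toReal := by
    rw [integral_eq_lintegral_of_nonneg_ae (Filter.Eventually.of_forall hf0) hfm]
  -- a.e. pointwise identity
  have hae : ∀ᵐ u : E ∂volume, u ≠ 0 := by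
    rw [ae_iff]
    have : {u : E | ¬ u ≠ 0} = {0} := by ext u; simp
    rw [this]
    exact measure_singleton 0
  have step2 : ∫⁻ u : E, ENNReal.ofReal (f u)
      = ∫⁻ u : E, ENNReal.ofReal ((Real.Gamma P)⁻¹)
          * ∫⁻ t in Ioi (0:ℝ), ENNReal.ofReal (F u t) := by
    apply lintegral_congr_ae
    filter_upwards [hae] with u hu
    have hun : 0 < ‖u‖ := norm_pos_iff.mpr hu
    have hb : 0 < ‖u‖^2 := by positivity
    have hval : ∫ t in Ioi (0:ℝ), t ^ (P-1) * rexp (-(‖u‖^2) * t)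
        = (‖u‖^2) ^ (-P) * Real.Gamma P := tgamma_val hP hb
    have hrw : ((‖u‖:ℝ)^2) ^ (-P) = ((‖u‖:ℝ) ^ (d+1))⁻¹ := by
      rw [← Real.rpow_natCast ‖u‖ 2, ← Real.rpow_mul hun.le, ← Real.rpow_natCast ‖u‖ (d+1),
        ← Real.rpow_neg hun.le]
      congr 1
      push_cast [hPdef]
      ring
    have hFint' : ∫ t in Ioi (0:ℝ), F u t
        = (1 - Real.cos (inner ℝ u x : ℝ)) * ((‖u‖^2) ^ (-P) * Real.Gamma P) := by
      rw [hFdef]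
      simp only
      rw [integral_const_mul, hval]
    have hfu : f u = (Real.Gamma P)⁻¹ * ∫ t in Ioi (0:ℝ), F u t := by
      rw [hFint', hrw, hfdef]
      simp only
      field_simp
    rw [hfu, ENNReal.ofReal_mul (by positivity),
      ofReal_integral_eq_lintegral_ofReal (hFint u)
        ((ae_restrict_iff' measurableSet_Ioi).mpr
          (Filter.Eventually.of_forall (fun t ht => hF0 u t ht)))]
  -- pull out constant, swap
  have step3 : ∫⁻ u : E, ENNReal.ofReal ((Real.Gamma P)⁻¹)
          * ∫⁻ t in Ioi (0:ℝ), ENNReal.ofReal (F u t)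
      = ENNReal.ofReal ((Real.Gamma P)⁻¹)
          * ∫⁻ t in Ioi (0:ℝ), ∫⁻ u : E, ENNReal.ofReal (F u t) := by
    rw [lintegral_const_mul' _ _ ENNReal.ofReal_ne_top]
    congr 1
    apply lintegral_lintegral_swap
    apply Measurable.aemeasurable
    apply ENNReal.measurable_ofReal.comp
    apply Measurable.mul
    · apply Measurable.const_sub
      apply Real.measurable_cos.comp
      exact ((Continuous.inner continuous_id continuous_const).measurable).comp measurable_fst
    · apply Measurable.mul
      · fun_prop
      · apply Real.measurable_exp.comp
        apply Measurable.mul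
        · exact ((continuous_norm.pow 2).measurable.comp measurable_fst).neg
        · exact measurable_snd
  -- the u-integral for fixed t > 0
  have huint : ∀ t : ℝ, 0 < t → Integrable (fun u : E => F u t) := by
    intro t ht
    have h1 : (fun u : E => F u t)
        = fun u : E => t ^ (P-1) * ((1 - Real.cos (inner ℝ u x : ℝ)) * rexp (-t * ‖u‖^2)) := by
      funext u
      rw [hFdef]
      simp only
      rw [show -‖u‖^2 * t = -t * ‖u‖^2 from by ring]
      ring
    rw [h1]
    apply Integrable.const_mul
    have h2 : (fun u : E => (1 - Real.cos (inner ℝ u x : ℝ)) * rexp (-t * ‖u‖^2))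
        = fun u : E => rexp (-t * ‖u‖^2) - Real.cos (inner ℝ x u : ℝ) * rexp (-t * ‖u‖^2) := by
      funext u
      rw [real_inner_comm]
      ring
    rw [h2]
    exact (gauss_int ht x).sub (gauss_cos_int ht x)
  have huval : ∀ t : ℝ, 0 < t → ∫ u : E, F u t
      = t ^ (P-1) * ((π/t) ^ ((d:ℝ)/2) * (1 - rexp (-(a/t)))) := by
    intro t ht
    have h1 : (fun u : E => F u t)
        = fun u : E => t ^ (P-1) * (rexp (-t * ‖u‖^2)
            - Real.cos (inner ℝ x u : ℝ) * rexp (-t * ‖u‖^2)) := by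
      funext u
      rw [hFdef]
      simp only
      rw [real_inner_comm, show -‖u‖^2 * t = -t * ‖u‖^2 from by ring]
      ring
    rw [h1, integral_const_mul, integral_sub (gauss_int ht x) (gauss_cos_int ht x),
      gauss_cos ht x]
    have h2 : ∫ u : E, rexp (-t * ‖u‖^2) = (π/t) ^ ((d:ℝ)/2) := by
      have := GaussianFourier.integral_rexp_neg_mul_sq_norm (V := EuclideanSpace ℝ (Fin d)) ht
      rw [finrank_euclideanSpace_fin] at this
      exact this
    rw [h2]
    have h3 : -‖x‖^2/(4*t) = -(a/t) := by rw [hadef]; ring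
    rw [h3]
    ring
  -- inner lintegral
  have step4 : ∫⁻ t in Ioi (0:ℝ), ∫⁻ u : E, ENNReal.ofReal (F u t)
      = ∫⁻ t in Ioi (0:ℝ),
          ENNReal.ofReal (π ^ ((d:ℝ)/2) * (t ^ (-(1/2):ℝ) * (1 - rexp (-(a/t))))) := by
    apply setLIntegral_congr_fun measurableSet_Ioi
    intro t ht
    dsimp only
    have ht0 : (0:ℝ) < t := ht
    rw [ofReal_integral_eq_lintegral_ofReal (huint t ht0)
        (Filter.Eventually.of_forall (fun u => by
          have h2 : (0:ℝ) ≤ t ^ (P-1) := Real.rpow_nonneg ht0.le _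
          have := hcos (inner ℝ u x : ℝ)
          have := Real.exp_nonneg (-‖u‖^2 * t)
          rw [hFdef]
          positivity)) |>.symm]
    rw [huval t ht0]
    congr 1
    rw [Real.div_rpow Real.pi_pos.le ht0.le]
    rw [show t ^ (P-1) * (π ^ ((d:ℝ)/2) / t ^ ((d:ℝ)/2) * (1 - rexp (-(a/t))))
        = π ^ ((d:ℝ)/2) * ((t ^ (P-1) / t ^ ((d:ℝ)/2)) * (1 - rexp (-(a/t)))) from by ring]
    congr 2
    rw [← Real.rpow_sub ht0]
    congr 1
    rw [hPdef]
    ring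
  -- evaluate the outer integral
  have step5 : ∫⁻ t in Ioi (0:ℝ),
          ENNReal.ofReal (π ^ ((d:ℝ)/2) * (t ^ (-(1/2):ℝ) * (1 - rexp (-(a/t)))))
      = ENNReal.ofReal (π ^ ((d:ℝ)/2)) * ENNReal.ofReal (2 * √π * √a) := by
    have hc : (0:ℝ) ≤ π ^ ((d:ℝ)/2) := Real.rpow_nonneg Real.pi_pos.le _
    have h1 : ∀ t ∈ Ioi (0:ℝ),
        ENNReal.ofReal (π ^ ((d:ℝ)/2) * (t ^ (-(1/2):ℝ) * (1 - rexp (-(a/t)))))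
        = ENNReal.ofReal (π ^ ((d:ℝ)/2))
            * ENNReal.ofReal (t ^ (-(1/2):ℝ) * (1 - rexp (-(a/t)))) := by
      intro t ht
      rw [ENNReal.ofReal_mul hc]
    rw [setLIntegral_congr_fun measurableSet_Ioi h1,
      lintegral_const_mul' _ _ ENNReal.ofReal_ne_top]
    congr 1
    rw [← ofReal_integral_eq_lintegral_ofReal (Kint ha)
        ((ae_restrict_iff' measurableSet_Ioi).mpr (Filter.Eventually.of_forall (fun t ht => by
          have ht0 : (0:ℝ) < t := ht
          have h2 : (0:ℝ) ≤ t ^ (-(1/2):ℝ) := Real.rpow_nonneg ht0.le _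
          have h3 : 0 ≤ 1 - rexp (-(a/t)) := one_sub_exp_neg_nonneg (by positivity)
          positivity)))]
    rw [Kval ha]
  -- put everything together
  rw [step1, step2, step3, step4, step5]
  rw [← ENNReal.ofReal_mul (by positivity), ← ENNReal.ofReal_mul (by positivity),
    ENNReal.toReal_ofReal (by positivity)]
  have hsa : √a = ‖x‖ / 2 := by
    rw [hadef, show ‖x‖^2/4 = (‖x‖/2)^2 from by ring]
    exact Real.sqrt_sq (by positivity)
  rw [hsa]
  have hpi : π ^ ((d:ℝ)/2) * √π = π ^ P := by
    rw [Real.sqrt_eq_rpow, ← Real.rpow_add Real.pi_pos, hPdef]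
    congr 1
    ring
  field_simp
  rw [← hpi]

/-- For every dimension `d ≥ 1` and every `x ∈ ℝ^d`,
`∫_{ℝ^d} (1 - cos(uᵀx)) / (c_d |u|^{d+1}) du = |x|`, where
`c_d = π^{(1+d)/2} / Γ((1+d)/2)`. -/
theorem stmt0 (d : ℕ) (hd : 1 ≤ d) (x : EuclideanSpace ℝ (Fin d)) :
    ∫ u : EuclideanSpace ℝ (Fin d),
      (1 - Real.cos (inner ℝ u x : ℝ)) /
        ((Real.pi ^ ((1 + (d : ℝ)) / 2) / Real.Gamma ((1 + (d : ℝ)) / 2)) * ‖u‖ ^ (d + 1))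
      = ‖x‖ := by
  set c : ℝ := Real.pi ^ ((1 + (d : ℝ)) / 2) / Real.Gamma ((1 + (d : ℝ)) / 2) with hcdef
  have hP : (0:ℝ) < (1 + (d:ℝ)) / 2 := by positivity
  have hc : 0 < c := div_pos (Real.rpow_pos_of_pos Real.pi_pos _) (Real.Gamma_pos_of_pos hP)
  by_cases hx : x = 0
  · subst hx
    have : ∀ u : EuclideanSpace ℝ (Fin d),
        (1 - Real.cos (inner ℝ u (0 : EuclideanSpace ℝ (Fin d)) : ℝ)) / (c * ‖u‖ ^ (d + 1)) = 0 := by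
      intro u
      rw [inner_zero_right]
      simp
    rw [integral_congr_ae (Filter.Eventually.of_forall this)]
    simp
  · have hpt : ∀ u : EuclideanSpace ℝ (Fin d),
        (1 - Real.cos (inner ℝ u x : ℝ)) / (c * ‖u‖ ^ (d + 1))
          = c⁻¹ * ((1 - Real.cos (inner ℝ u x : ℝ)) / ‖u‖ ^ (d + 1)) := by
      intro u
      rw [div_eq_mul_inv, mul_inv, div_eq_mul_inv]
      ring
    rw [integral_congr_ae (Filter.Eventually.of_forall hpt), integral_const_mul,
      main hd x hx, hcdef]
    field_simp
end

section
/- Fix c ≠ 0 and define g : (0,1] → ℝ by g(t) = 2√(t/π)(e^{−c²t/2} − 1) + c t (2Φ(c√(t/2)) − 1), where Φ is the standard normal CDF. Then g(t) > 0 for all t ∈ (0,1] and g is strictly increasing on (0,1], so it attains its maximum on (0,1] uniquely at t = 1. -/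
open Real Set MeasureTheory intervalIntegral

/-- The standard normal cumulative distribution function. -/
noncomputable def stdNormalCDF (z : ℝ) : ℝ :=
  ∫ s in Set.Iic z, (2 * Real.pi) ^ (-(1 : ℝ) / 2) * Real.exp (-s ^ 2 / 2)

/-- The (rescaled) distance covariance function for Brownian motion versus Brownian motion
with linear trend `ct`. -/
noncomputable def g8 (c t : ℝ) : ℝ :=
  2 * Real.sqrt (t / Real.pi) * (Real.exp (-c ^ 2 * t / 2) - 1) +
    c * t * (2 * stdNormalCDF (c * Real.sqrt (t / 2)) - 1)


lemma expPolyMono (p : ℝ → ℝ) (p' : ℝ → ℝ)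
    (hp : ∀ x : ℝ, HasDerivAt p (p' x) x)
    (hsign : ∀ x : ℝ, 0 ≤ x → 0 ≤ p x + p' x) (y : ℝ) (hy : 0 ≤ y) :
    p 0 ≤ Real.exp y * p y := by
  have key : ∀ x : ℝ, HasDerivAt (fun t => Real.exp t * p t)
      (Real.exp x * (p x + p' x)) x := by
    intro x
    have := (Real.hasDerivAt_exp x).fun_mul (hp x)
    exact this.congr_deriv (by ring)
  have mono : MonotoneOn (fun t => Real.exp t * p t) (Ici 0) := by
    apply monotoneOn_of_deriv_nonneg (convex_Ici 0)
    · exact fun x _ => ((key x).differentiableAt.continuousAt).continuousWithinAt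
    · exact fun x _ => (key x).differentiableAt.differentiableWithinAt
    · intro x hx
      rw [(key x).deriv]
      have : (0:ℝ) ≤ x := le_of_lt (by simpa using hx)
      exact mul_nonneg (Real.exp_pos x).le (hsign x this)
  simpa using mono self_mem_Ici hy hy

lemma expPolyAnti (p : ℝ → ℝ) (p' : ℝ → ℝ)
    (hp : ∀ x : ℝ, HasDerivAt p (p' x) x)
    (hsign : ∀ x : ℝ, 0 ≤ x → p x + p' x ≤ 0) (y : ℝ) (hy : 0 ≤ y) :
    Real.exp y * p y ≤ p 0 := by
  have := expPolyMono (fun x => -p x) (fun x => -p' x)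
    (fun x => (hp x).fun_neg) (fun x hx => by have := hsign x hx; linarith) y hy
  simp only [mul_neg] at this
  linarith

lemma div_exp_step {a b : ℝ} (h1 : 1 ≤ Real.exp a * b) : Real.exp (-a) ≤ b := by
  have h2 : Real.exp (-a) * Real.exp a = 1 := by rw [← Real.exp_add]; simp
  nlinarith [Real.exp_pos a, Real.exp_pos (-a)]

lemma div_exp_step' {a b : ℝ} (h1 : Real.exp a * b ≤ 1) : b ≤ Real.exp (-a) := by
  have h2 : Real.exp (-a) * Real.exp a = 1 := by rw [← Real.exp_add]; simp
  nlinarith [Real.exp_pos a, Real.exp_pos (-a)]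

lemma expNegLe2 (y : ℝ) (hy : 0 ≤ y) : Real.exp (-y) ≤ 1 - y + y ^ 2 / 2 := by
  apply div_exp_step
  have := expPolyMono (fun x => 1 - x + x ^ 2 / 2) (fun x => -1 + x)
    (fun x => by
      have h := (((hasDerivAt_id x).const_sub 1).fun_add ((hasDerivAt_pow 2 x).div_const 2))
      exact h.congr_deriv (by ring))
    (fun x hx => by nlinarith [sq_nonneg x]) y hy
  simpa using this

lemma expNegGe3 (y : ℝ) (hy : 0 ≤ y) : 1 - y + y ^ 2 / 2 - y ^ 3 / 6 ≤ Real.exp (-y) := by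
  apply div_exp_step'
  have := expPolyAnti (fun x => 1 - x + x ^ 2 / 2 - x ^ 3 / 6) (fun x => -1 + x - x ^ 2 / 2)
    (fun x => by
      have h := ((((hasDerivAt_id x).const_sub 1).fun_add ((hasDerivAt_pow 2 x).div_const 2)).fun_sub
        ((hasDerivAt_pow 3 x).div_const 6))
      exact h.congr_deriv (by ring))
    (fun x hx => by nlinarith [pow_nonneg hx 3]) y hy
  simpa using this

lemma expNegLe4 (y : ℝ) (hy : 0 ≤ y) :
    Real.exp (-y) ≤ 1 - y + y ^ 2 / 2 - y ^ 3 / 6 + y ^ 4 / 24 := by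
  apply div_exp_step
  have := expPolyMono (fun x => 1 - x + x ^ 2 / 2 - x ^ 3 / 6 + x ^ 4 / 24)
    (fun x => -1 + x - x ^ 2 / 2 + x ^ 3 / 6)
    (fun x => by
      have h := (((((hasDerivAt_id x).const_sub 1).fun_add ((hasDerivAt_pow 2 x).div_const 2)).fun_sub
        ((hasDerivAt_pow 3 x).div_const 6)).fun_add ((hasDerivAt_pow 4 x).div_const 24))
      exact h.congr_deriv (by ring))
    (fun x hx => by nlinarith [pow_nonneg hx 4]) y hy
  simpa using this



noncomputable def gaussE (u : ℝ) : ℝ := ∫ s in (0:ℝ)..u, Real.exp (-s ^ 2 / 2)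

lemma gaussCont : Continuous (fun s : ℝ => Real.exp (-s ^ 2 / 2)) := by fun_prop

lemma gaussE_hasDerivAt (u : ℝ) : HasDerivAt gaussE (Real.exp (-u ^ 2 / 2)) u :=
  intervalIntegral.integral_hasDerivAt_right
    (gaussCont.intervalIntegrable _ _)
    gaussCont.stronglyMeasurable.stronglyMeasurableAtFilter
    gaussCont.continuousAt

lemma gaussE_nonneg {u : ℝ} (hu : 0 ≤ u) : 0 ≤ gaussE u := by
  apply intervalIntegral.integral_nonneg hu
  intro x _; positivity

lemma gaussE_mono {a b : ℝ} (hab : a ≤ b) : gaussE a ≤ gaussE b := by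
  have h := intervalIntegral.integral_add_adjacent_intervals
    (gaussCont.intervalIntegrable (μ := volume) 0 a) (gaussCont.intervalIntegrable a b)
  have h2 : 0 ≤ ∫ s in a..b, Real.exp (-s ^ 2 / 2) :=
    intervalIntegral.integral_nonneg hab (fun x _ => by positivity)
  unfold gaussE
  rw [← h]; linarith

lemma gaussE_lb (u : ℝ) (hu : 0 ≤ u) :
    u - u ^ 3 / 6 + u ^ 5 / 40 - u ^ 7 / 336 ≤ gaussE u := by
  have hpoly : ∀ x : ℝ, HasDerivAt (fun s : ℝ => s - s ^ 3 / 18 * 3 + s ^ 5 / 40 - s ^ 7 / 336)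
      (1 - x ^ 2 / 2 + x ^ 4 / 8 - x ^ 6 / 48) x := by
    intro x
    have h := ((((hasDerivAt_id x).fun_sub (((hasDerivAt_pow 3 x).div_const 18).mul_const 3)).fun_add
      ((hasDerivAt_pow 5 x).div_const 40)).fun_sub ((hasDerivAt_pow 7 x).div_const 336))
    exact h.congr_deriv (by ring)
  have hint : ∫ s in (0:ℝ)..u, (1 - s ^ 2 / 2 + s ^ 4 / 8 - s ^ 6 / 48) =
      u - u ^ 3 / 6 + u ^ 5 / 40 - u ^ 7 / 336 := by
    rw [intervalIntegral.integral_eq_sub_of_hasDerivAt (fun x _ => hpoly x)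
      ((Continuous.intervalIntegrable (by fun_prop) 0 u))]
    ring
  rw [← hint]
  apply intervalIntegral.integral_mono_on hu
    (Continuous.intervalIntegrable (by fun_prop) 0 u)
    (gaussCont.intervalIntegrable 0 u)
  intro x hx
  have := expNegGe3 (x ^ 2 / 2) (by positivity)
  calc 1 - x ^ 2 / 2 + x ^ 4 / 8 - x ^ 6 / 48
      = 1 - x ^ 2 / 2 + (x ^ 2 / 2) ^ 2 / 2 - (x ^ 2 / 2) ^ 3 / 6 := by ring
    _ ≤ Real.exp (-(x ^ 2 / 2)) := this
    _ = Real.exp (-x ^ 2 / 2) := by ring_nf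


noncomputable def gaussG (u : ℝ) : ℝ := u ^ 2 * gaussE u - u * (1 - Real.exp (-u ^ 2))

lemma gaussG_hasDerivAt (u : ℝ) : HasDerivAt gaussG
    (2 * u * gaussE u + u ^ 2 * Real.exp (-u ^ 2 / 2)
      + Real.exp (-u ^ 2) - 2 * u ^ 2 * Real.exp (-u ^ 2) - 1) u := by
  have h1 : HasDerivAt (fun u : ℝ => Real.exp (-u ^ 2)) (Real.exp (-u ^ 2) * (-(2 * u))) u := by
    exact (Real.hasDerivAt_exp _).comp u (by simpa using (hasDerivAt_pow 2 u).fun_neg)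
  have h2 : HasDerivAt (fun u : ℝ => u ^ 2 * gaussE u)
      (2 * u ^ 1 * gaussE u + u ^ 2 * Real.exp (-u ^ 2 / 2)) u :=
    (hasDerivAt_pow 2 u).mul (gaussE_hasDerivAt u)
  have h3 := (hasDerivAt_id u).fun_mul ((hasDerivAt_const u 1).fun_sub h1)
  have := h2.fun_sub h3
  exact this.congr_deriv (by simp only [id_eq, one_mul]; ring)

lemma Ppos (u : ℝ) (hu : 0 < u) :
    0 < 2 * u * gaussE u + u ^ 2 * Real.exp (-u ^ 2 / 2)
      + Real.exp (-u ^ 2) - 2 * u ^ 2 * Real.exp (-u ^ 2) - 1 := by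
  have e1 : Real.exp (-u ^ 2 / 2) = Real.exp (-(u ^ 2 / 2)) := by ring_nf
  have e2 : Real.exp (-u ^ 2) = Real.exp (-(u ^ 2)) := by ring_nf
  rcases le_or_gt (u ^ 2) 2 with h2 | h2
  · -- small case
    set v := u ^ 2 with hv
    have hv0 : 0 < v := by positivity
    have hE := gaussE_lb u hu.le
    have hEa : 2 * v - v ^ 2 / 3 + v ^ 3 / 20 - v ^ 4 / 168 ≤ 2 * u * gaussE u := by
      have := mul_le_mul_of_nonneg_left hE (by positivity : (0:ℝ) ≤ 2 * u)
      calc 2 * v - v ^ 2 / 3 + v ^ 3 / 20 - v ^ 4 / 168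
          = 2 * u * (u - u ^ 3 / 6 + u ^ 5 / 40 - u ^ 7 / 336) := by rw [hv]; ring
        _ ≤ 2 * u * gaussE u := this
    have hx := expNegGe3 (v / 2) (by positivity)
    have hxa : v - v ^ 2 / 2 + v ^ 3 / 8 - v ^ 4 / 48 ≤ v * Real.exp (-(v / 2)) := by
      have := mul_le_mul_of_nonneg_left hx (le_of_lt hv0)
      calc v - v ^ 2 / 2 + v ^ 3 / 8 - v ^ 4 / 48
          = v * (1 - v / 2 + (v / 2) ^ 2 / 2 - (v / 2) ^ 3 / 6) := by ring
        _ ≤ v * Real.exp (-(v / 2)) := this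
    have hwl := expNegGe3 v hv0.le
    have hwu := expNegLe4 v hv0.le
    have hwa : 2 * v * Real.exp (-v) ≤ 2 * v - 2 * v ^ 2 + v ^ 3 - v ^ 4 / 3 + v ^ 5 / 12 := by
      have := mul_le_mul_of_nonneg_left hwu (by positivity : (0:ℝ) ≤ 2 * v)
      calc 2 * v * Real.exp (-v) ≤ 2 * v * (1 - v + v ^ 2 / 2 - v ^ 3 / 6 + v ^ 4 / 24) := this
        _ = 2 * v - 2 * v ^ 2 + v ^ 3 - v ^ 4 / 3 + v ^ 5 / 12 := by ring
    have hQ : 0 < 5 / 3 - 119 / 120 * v + 103 / 336 * v ^ 2 - 1 / 12 * v ^ 3 := by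
      nlinarith [sq_nonneg (v - 2), sq_nonneg v, sq_nonneg (v - 1),
        mul_nonneg (sub_nonneg.2 h2) hv0.le, mul_nonneg (mul_nonneg (sub_nonneg.2 h2) hv0.le) hv0.le]
    have hQQ : 0 < 5 / 3 * v ^ 2 - 119 / 120 * v ^ 3 + 103 / 336 * v ^ 4 - 1 / 12 * v ^ 5 := by
      have := mul_pos (mul_pos hv0 hv0) hQ
      calc (0:ℝ) < v * v * (5 / 3 - 119 / 120 * v + 103 / 336 * v ^ 2 - 1 / 12 * v ^ 3) := this
        _ = 5 / 3 * v ^ 2 - 119 / 120 * v ^ 3 + 103 / 336 * v ^ 4 - 1 / 12 * v ^ 5 := by ring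
    rw [e1]
    linarith
  · -- large case
    have hs2 : Real.sqrt 2 ≤ u := by
      rw [show (2:ℝ) = Real.sqrt 2 ^ 2 by rw [Real.sq_sqrt]; norm_num] at h2
      nlinarith [Real.sqrt_nonneg 2]
    have hsq : Real.sqrt 2 ^ 2 = 2 := Real.sq_sqrt (by norm_num)
    have c3 : Real.sqrt 2 ^ 3 = 2 * Real.sqrt 2 := by rw [pow_succ, hsq]
    have c5 : Real.sqrt 2 ^ 5 = 4 * Real.sqrt 2 := by
      rw [show (5:ℕ) = 2+2+1 by rfl, pow_add, pow_add, hsq, pow_one]; ring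
    have c7 : Real.sqrt 2 ^ 7 = 8 * Real.sqrt 2 := by
      rw [show Real.sqrt 2 ^ 7 = (Real.sqrt 2 ^ 2) ^ 3 * Real.sqrt 2 by ring, hsq]; ring
    have hE2 : 2 * Real.sqrt 2 / 3 ≤ gaussE (Real.sqrt 2) := by
      have := gaussE_lb (Real.sqrt 2) (Real.sqrt_nonneg 2)
      rw [c3, c5, c7] at this
      have := Real.sqrt_nonneg 2
      linarith
    have hEu : 2 * Real.sqrt 2 / 3 ≤ gaussE u := le_trans hE2 (gaussE_mono hs2)
    have h83 : 8 / 3 ≤ 2 * u * gaussE u := by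
      nlinarith [Real.sqrt_nonneg 2, gaussE_nonneg (le_trans (Real.sqrt_nonneg 2) hs2)]
    have hvx : 0 ≤ u ^ 2 * Real.exp (-u ^ 2 / 2) := by positivity
    have hw : 0 ≤ Real.exp (-u ^ 2) := (Real.exp_pos _).le
    have h2vw : 2 * u ^ 2 * Real.exp (-u ^ 2) ≤ 1 := by
      have ha := Real.add_one_le_exp (u ^ 2 / 2)
      have hsq2 : Real.exp (u ^ 2 / 2) * Real.exp (u ^ 2 / 2) = Real.exp (u ^ 2) := by
        rw [← Real.exp_add]; ring_nf
      have hup : 2 * u ^ 2 ≤ Real.exp (u ^ 2) := by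
        nlinarith [sq_nonneg (u ^ 2 / 2 - 1), Real.exp_pos (u ^ 2 / 2)]
      have hinv : Real.exp (-u ^ 2) * Real.exp (u ^ 2) = 1 := by
        rw [← Real.exp_add]; ring_nf; exact Real.exp_zero
      nlinarith [Real.exp_pos (-u ^ 2), Real.exp_pos (u ^ 2)]
    linarith


lemma gauss_integrable : Integrable (fun s : ℝ => Real.exp (-s ^ 2 / 2)) := by
  have h := integrable_exp_neg_mul_sq (b := (1/2:ℝ)) (by norm_num)
  convert h using 2 with x
  ring_nf

lemma gauss_total : ∫ s : ℝ, Real.exp (-s ^ 2 / 2) = Real.sqrt (2 * π) := by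
  have h := integral_gaussian (1/2 : ℝ)
  rw [show π / (1/2 : ℝ) = 2 * π by ring] at h
  rw [← h]
  congr 1 with x
  ring_nf

lemma gauss_Iic_zero : ∫ s in Set.Iic (0:ℝ), Real.exp (-s ^ 2 / 2) = Real.sqrt (2 * π) / 2 := by
  have h1 : ∫ s in Set.Iic (0:ℝ), Real.exp (-s ^ 2 / 2)
      = ∫ s in Set.Ioi (0:ℝ), Real.exp (-s ^ 2 / 2) := by
    have h := integral_comp_neg_Iic (0:ℝ) (fun s => Real.exp (-s ^ 2 / 2))
    simp only [neg_zero] at h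
    rw [← h]
    congr 1 with s
    ring_nf
  have h2 := intervalIntegral.integral_Iic_add_Ioi (μ := volume) (b := (0:ℝ))
    (gauss_integrable.integrableOn) (gauss_integrable.integrableOn)
  rw [gauss_total] at h2
  linarith [h1, h2]

lemma rpow_half : (2 * π) ^ (-(1:ℝ) / 2) = (Real.sqrt (2 * π))⁻¹ := by
  rw [show (-(1:ℝ) / 2) = -(1/2 : ℝ) by norm_num,
    Real.rpow_neg (by positivity : (0:ℝ) ≤ 2 * π), Real.sqrt_eq_rpow]

lemma stdNormalCDF_eq (z : ℝ) :
    stdNormalCDF z = 1 / 2 + (2 * π) ^ (-(1:ℝ) / 2) * gaussE z := by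
  set C := (2 * π) ^ (-(1:ℝ) / 2) with hC
  have hCval : C = (Real.sqrt (2 * π))⁻¹ := rpow_half
  have hint : Integrable (fun s : ℝ => C * Real.exp (-s ^ 2 / 2)) :=
    gauss_integrable.const_mul C
  have hsub := intervalIntegral.integral_Iic_sub_Iic (μ := volume)
    (f := fun s : ℝ => C * Real.exp (-s ^ 2 / 2)) (a := 0) (b := z)
    hint.integrableOn hint.integrableOn
  have hsqrtpos : (0:ℝ) < Real.sqrt (2 * π) := Real.sqrt_pos.2 (by positivity)
  have h0 : stdNormalCDF 0 = 1 / 2 := by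
    unfold stdNormalCDF
    rw [MeasureTheory.integral_const_mul, gauss_Iic_zero, rpow_half]
    field_simp
  have hE : ∫ s in (0:ℝ)..z, C * Real.exp (-s ^ 2 / 2) = C * gaussE z := by
    unfold gaussE
    rw [intervalIntegral.integral_const_mul]
  have hd : stdNormalCDF z - stdNormalCDF 0 = C * gaussE z := by
    unfold stdNormalCDF
    rw [hsub, hE]
  rw [h0] at hd
  linarith

lemma two_C : 2 * (2 * π) ^ (-(1:ℝ) / 2) = Real.sqrt (2 / π) := by
  rw [rpow_half]
  have h2 : (0:ℝ) < Real.sqrt (2 * π) := Real.sqrt_pos.2 (by positivity)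
  have h1 : Real.sqrt (2 / π) * Real.sqrt (2 * π) = 2 := by
    rw [← Real.sqrt_mul (by positivity)]
    rw [show 2 / π * (2 * π) = 2 ^ 2 by field_simp]
    exact Real.sqrt_sq (by norm_num)
  have key : 2 * (Real.sqrt (2 * π))⁻¹ * Real.sqrt (2 * π)
      = Real.sqrt (2 / π) * Real.sqrt (2 * π) := by
    rw [h1]
    field_simp
  exact mul_right_cancel₀ h2.ne' key

lemma cdf_line (z : ℝ) :
    2 * stdNormalCDF z - 1 = Real.sqrt (2 / π) * gaussE z := by
  rw [stdNormalCDF_eq z, ← two_C]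
  ring

lemma gaussE_neg (w : ℝ) : gaussE (-w) = - gaussE w := by
  have h := intervalIntegral.integral_comp_neg (a := (0:ℝ)) (b := w)
    (f := fun s => Real.exp (-s ^ 2 / 2))
  simp only [neg_zero] at h
  have heq : (∫ x in (0:ℝ)..w, Real.exp (-(-x) ^ 2 / 2))
      = ∫ x in (0:ℝ)..w, Real.exp (-x ^ 2 / 2) := by
    congr 1 with x
    ring_nf
  unfold gaussE
  rw [intervalIntegral.integral_symm]
  rw [← h, heq]


lemma gaussG_strictMono : StrictMonoOn gaussG (Set.Ici 0) := by
  apply strictMonoOn_of_deriv_pos (convex_Ici 0)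
  · exact fun x _ => (gaussG_hasDerivAt x).differentiableAt.continuousAt.continuousWithinAt
  · intro x hx
    rw [interior_Ici] at hx
    rw [(gaussG_hasDerivAt x).deriv]
    exact Ppos x hx

lemma gaussG_zero : gaussG 0 = 0 := by simp [gaussG]

lemma g8_eq (c : ℝ) (hc : c ≠ 0) (t : ℝ) (ht : 0 < t) :
    g8 c t = (2 * Real.sqrt (2 / π) / |c|) * gaussG (|c| * Real.sqrt (t / 2)) := by
  have hd : 0 < |c| := abs_pos.2 hc
  set d := |c| with hdd
  set u := d * Real.sqrt (t / 2) with hu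
  have ht2 : (0:ℝ) ≤ t / 2 := by linarith
  have hsq : Real.sqrt (t / 2) ^ 2 = t / 2 := Real.sq_sqrt ht2
  have hu2 : u ^ 2 = c ^ 2 * t / 2 := by
    rw [hu, mul_pow, hsq, hdd, sq_abs]; ring
  have hcE : c * gaussE (c * Real.sqrt (t / 2)) = d * gaussE u := by
    rcases abs_cases c with ⟨h1, _⟩ | ⟨h1, _⟩
    · rw [hu, hdd, h1]
    · rw [hu, hdd, h1]
      rw [show (-c) * Real.sqrt (t / 2) = -(c * Real.sqrt (t / 2)) by ring, gaussE_neg]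
      ring
  have hsqrtu : Real.sqrt (2 / π) * Real.sqrt (t / 2) = Real.sqrt (t / π) := by
    rw [← Real.sqrt_mul (by positivity)]
    congr 1
    field_simp
  have hX : Real.exp (-u ^ 2) = Real.exp (-c ^ 2 * t / 2) := by
    rw [hu2]; ring_nf
  unfold g8 gaussG
  rw [cdf_line, hX, mul_comm (Real.sqrt (2 / π)) (gaussE (c * Real.sqrt (t / 2)))]
  -- now express everything
  have expand : c * t * (gaussE (c * Real.sqrt (t / 2)) * Real.sqrt (2 / π))
      = t * Real.sqrt (2 / π) * (d * gaussE u) := by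
    rw [← hcE]; ring
  rw [expand]
  have coeff1 : 2 * Real.sqrt (2 / π) / d * u ^ 2 = t * Real.sqrt (2 / π) * d := by
    rw [hu, mul_pow, hsq, hdd, sq_abs]
    field_simp [hd.ne']
    ring_nf
    rw [sq_abs]
  have coeff2 : 2 * Real.sqrt (2 / π) / d * u = 2 * Real.sqrt (t / π) := by
    rw [hu, ← hsqrtu]
    field_simp
  calc 2 * Real.sqrt (t / π) * (Real.exp (-c ^ 2 * t / 2) - 1)
        + t * Real.sqrt (2 / π) * (d * gaussE u)
      = (t * Real.sqrt (2 / π) * d) * gaussE u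
        - (2 * Real.sqrt (t / π)) * (1 - Real.exp (-c ^ 2 * t / 2)) := by ring
    _ = 2 * Real.sqrt (2 / π) / d * (u ^ 2 * gaussE u - u * (1 - Real.exp (-c ^ 2 * t / 2))) := by
        rw [← coeff1, ← coeff2]; ring

/-- For `c ≠ 0`, `g8 c` is positive and strictly increasing on `(0,1]`, hence attains its
maximum on `(0,1]` uniquely at `t = 1`. -/
theorem stmt8 (c : ℝ) (hc : c ≠ 0) :
    (∀ t ∈ Set.Ioc (0 : ℝ) 1, 0 < g8 c t) ∧
      StrictMonoOn (g8 c) (Set.Ioc 0 1) ∧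
      ∀ t ∈ Set.Ioc (0 : ℝ) 1, t ≠ 1 → g8 c t < g8 c 1 := by
  have hd : 0 < |c| := abs_pos.2 hc
  have hK : 0 < 2 * Real.sqrt (2 / π) / |c| := by
    have : (0:ℝ) < Real.sqrt (2 / π) := Real.sqrt_pos.2 (by positivity)
    positivity
  have hmono : StrictMonoOn (g8 c) (Set.Ioc 0 1) := by
    intro s hs t ht hst
    rw [g8_eq c hc s hs.1, g8_eq c hc t ht.1]
    have harg : |c| * Real.sqrt (s / 2) < |c| * Real.sqrt (t / 2) := by
      apply mul_lt_mul_of_pos_left _ hd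
      exact Real.sqrt_lt_sqrt (by linarith [hs.1]) (by linarith)
    have := gaussG_strictMono (by positivity : (0:ℝ) ≤ |c| * Real.sqrt (s / 2))
      (by positivity : (0:ℝ) ≤ |c| * Real.sqrt (t / 2)) harg
    exact mul_lt_mul_of_pos_left this hK
  have hpos : ∀ t ∈ Set.Ioc (0 : ℝ) 1, 0 < g8 c t := by
    intro t ht
    rw [g8_eq c hc t ht.1]
    have hupos : 0 < |c| * Real.sqrt (t / 2) := by
      have : (0:ℝ) < Real.sqrt (t / 2) := Real.sqrt_pos.2 (by linarith [ht.1])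
      positivity
    have := gaussG_strictMono (le_refl (0:ℝ)) hupos.le hupos
    rw [gaussG_zero] at this
    exact mul_pos hK this
  exact ⟨hpos, hmono, fun t ht hne =>
    hmono ht (by constructor <;> norm_num) (lt_of_le_of_ne ht.2 hne)⟩
end
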